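/- arXiv:0704.1385 — 5 statements merged into one kernel-verified Lean document; each statement's English description precedes it below -/
import Mathlib

section
/- Let x, x̃ < 0, y ∈ (x, 0), and set Δϑ = ln(x̃/x). If c ∈ (x̃, 1) satisfies (c - x̃)/(1 - c) = ((y - x)/(1 - y))·(x̃/x), then ln((c - x̃)/(-c)) - ln((y - x)/(-y)) = ln((x̃ - 1)/(x - 1)). -/
theorem stmt2 (x xt y c : ℝ) (hx : x < 0) (hxt : xt < 0)
    (hyx : x < y) (hy0 : y < 0) (hc1 : xt < c) (hc2 : c < 1)
    (hc : (c - xt) / (1 - c) = (y - x) / (1 - y) * (xt / x)) :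
    Real.log ((c - xt) / (-c)) - Real.log ((y - x) / (-y))
      = Real.log ((xt - 1) / (x - 1)) := by
  have hx0 : x ≠ 0 := ne_of_lt hx
  have h1c : (1:ℝ) - c ≠ 0 := by linarith
  have h1y : (1:ℝ) - y > 0 := by linarith
  have key : (c - xt) * ((1 - y) * x) = (y - x) * xt * (1 - c) := by
    field_simp at hc
    linarith [hc]
  have hA : (1 - y) * x + (y - x) * xt < 0 := by nlinarith
  have hB : xt * y * (1 - x) > 0 := mul_pos (mul_pos_of_neg_of_neg hxt hy0) (by linarith)
  have hcA : c * ((1 - y) * x + (y - x) * xt) = xt * y * (1 - x) := by nlinarith [key]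
  have hc0 : c < 0 := by nlinarith
  have hratio : (c - xt) / (-c) = ((y - x) / (-y)) * ((xt - 1) / (x - 1)) := by
    have hcne : c ≠ 0 := ne_of_lt hc0
    have hyne : y ≠ 0 := ne_of_lt hy0
    have hx1 : x - 1 ≠ 0 := by linarith
    field_simp
    nlinarith [key]
  have hpos1 : (y - x) / (-y) > 0 := div_pos (by linarith) (by linarith)
  have hpos2 : (xt - 1) / (x - 1) > 0 := div_pos_of_neg_of_neg (by linarith) (by linarith)
  rw [hratio, Real.log_mul (ne_of_gt hpos1) (ne_of_gt hpos2)]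
  ring
end

section
/- Let x, x̃ ∈ (-1, 0), y ∈ (x, -x), Δθ = ln((x̃/(−1−x̃))·((−1−x)/x)), and Δt = ln(((x̃−1)/(−1−x̃))·((−1−x)/(x−1))). If c ∈ (x̃, 1) satisfies (c − x̃)/(1 − c) = ((y − x)/(1 − y))·(x̃/(1+x̃))·((1+x)/x), then ln((c − x̃)/(−x̃ − c)) − ln((y − x)/(−x − y)) = Δt. -/
theorem stmt3 (x xt y c : ℝ)
    (hx1 : -1 < x) (hx0 : x < 0) (hxt1 : -1 < xt) (hxt0 : xt < 0)
    (hyx : x < y) (hy : y < -x) (hc1 : xt < c) (hc2 : c < 1)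
    (hc : (c - xt) / (1 - c) = (y - x) / (1 - y) * (xt / (1 + xt)) * ((1 + x) / x)) :
    Real.log ((c - xt) / (-xt - c)) - Real.log ((y - x) / (-x - y))
      = Real.log ((xt - 1) / (-1 - xt) * ((-1 - x) / (x - 1))) := by
  have h1 : (0:ℝ) < y - x := by linarith
  have h2 : (0:ℝ) < 1 - y := by linarith
  have h3 : (0:ℝ) < -x - y := by linarith
  have h4 : (0:ℝ) < 1 + x := by linarith
  have h5 : (0:ℝ) < 1 + xt := by linarith
  have h6 : (0:ℝ) < c - xt := by linarith
  have h7 : (0:ℝ) < 1 - c := by linarith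
  have h8 : (0:ℝ) < 1 - x := by linarith
  have h9 : (0:ℝ) < 1 - xt := by linarith
  have hxne : x ≠ 0 := ne_of_lt hx0
  have hpoly : (c - xt) * ((1 - y) * (1 + xt) * x) = (y - x) * xt * (1 + x) * (1 - c) := by
    have h := hc
    rw [div_eq_iff (ne_of_gt h7)] at h
    field_simp at h
    linarith
  have hid : (c + xt) * ((1 - y) * (1 + xt) * x + (y - x) * xt * (1 + x))
      = xt * (1 + xt) * (1 - x) * (x + y) := by
    linear_combination hpoly
  have hDB : (1 - y) * (1 + xt) * x + (y - x) * xt * (1 + x) < 0 := by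
    nlinarith [mul_pos (mul_pos h2 h5) (neg_pos.mpr hx0),
      mul_pos (mul_pos h1 (neg_pos.mpr hxt0)) h4]
  have hRHS : (0:ℝ) < xt * (1 + xt) * (1 - x) * (x + y) := by
    nlinarith [mul_pos (mul_pos (neg_pos.mpr hxt0) h5) h8]
  have h10 : (0:ℝ) < -xt - c := by nlinarith [hid]
  have key0 : ((1 - y) * (1 + xt) * x + (y - x) * xt * (1 + x)) *
        ((c - xt) * ((-x - y) * ((-1 - xt) * (x - 1))))
      = ((1 - y) * (1 + xt) * x + (y - x) * xt * (1 + x)) *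
        ((y - x) * ((xt - 1) * (-1 - x)) * (-xt - c)) := by
    linear_combination ((-x - y) * (1 + xt) * (1 - x) + (y - x) * (1 - xt) * (1 + x)) * hpoly
  have key0' : (c - xt) * ((-x - y) * ((-1 - xt) * (x - 1)))
      = (y - x) * ((xt - 1) * (-1 - x)) * (-xt - c) :=
    mul_left_cancel₀ (ne_of_lt hDB) key0
  have hden : ((-x - y) * ((-1 - xt) * (x - 1))) ≠ 0 := by
    have : (0:ℝ) < (-x - y) * ((-1 - xt) * (x - 1)) := by
      apply mul_pos h3
      exact mul_pos_of_neg_of_neg (by linarith) (by linarith)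
    exact ne_of_gt this
  have key : (c - xt) / (-xt - c)
      = (y - x) / (-x - y) * ((xt - 1) / (-1 - xt) * ((-1 - x) / (x - 1))) := by
    rw [div_mul_div_comm, div_mul_div_comm, div_eq_div_iff (ne_of_gt h10) hden]
    linarith [key0']
  rw [key, Real.log_mul (by positivity) _, Real.log_div (by positivity) (by positivity)]
  · ring
  · have hnum : (0:ℝ) < (xt - 1) / (-1 - xt) * ((-1 - x) / (x - 1)) := by
      apply mul_pos
      · exact div_pos_of_neg_of_neg (by linarith) (by linarith)
      · exact div_pos_of_neg_of_neg (by linarith) (by linarith)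
    exact ne_of_gt hnum
end

section
/- Let 0 ≤ z < y < ỹ < −x̃ < 1 with x̃ ∈ (−1, 0). Define c by the condition (c − ỹ)/(x̃ − c) = ((z − y)/(x̃ − z))·(ỹ/(−x̃ − ỹ))·((−x̃ − y)/y)·((1 − ỹ)/(1 − y)). Then (c − ỹ)/(−ỹ − c) > (z − y)/(−y − z); that is, p_{ỹ,−ỹ}(c) > p_{y,−y}(z), with strict inequality (even for z = 0). -/
set_option maxHeartbeats 1000000


theorem stmt8 (xt y yt z c : ℝ)
    (hxt1 : -1 < xt) (hxt0 : xt < 0)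
    (hz0 : 0 ≤ z) (hzy : z < y) (hyyt : y < yt) (hytx : yt < -xt)
    (hc : (c - yt) / (xt - c)
        = (z - y) / (xt - z) * (yt / (-xt - yt)) * ((-xt - y) / y) * ((1 - yt) / (1 - y))) :
    (c - yt) / (-yt - c) > (z - y) / (-y - z) := by
  have hy : 0 < y := lt_of_le_of_lt hz0 hzy
  have hyt : 0 < yt := lt_trans hy hyyt
  have ha : 0 < -xt := by linarith
  have ha1 : -xt < 1 := by linarith
  have h1y : 0 < 1 - y := by linarith
  have h1yt : 0 < 1 - yt := by linarith
  have hay : 0 < -xt - y := by linarith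
  have hayt : 0 < -xt - yt := by linarith
  have hza : 0 < z - xt := by linarith
  have hyz : 0 < y - z := by linarith
  -- RHS of hc is positive
  have hR : 0 < (z - y) / (xt - z) * (yt / (-xt - yt)) * ((-xt - y) / y) * ((1 - yt) / (1 - y)) := by
    have h1 : 0 < (z - y) / (xt - z) := div_pos_of_neg_of_neg (by linarith) (by linarith)
    have h2 : 0 < yt / (-xt - yt) := div_pos hyt hayt
    have h3 : 0 < (-xt - y) / y := div_pos hay hy
    have h4 : 0 < (1 - yt) / (1 - y) := div_pos h1yt h1y
    positivity
  have hcpos : 0 < (c - yt) / (xt - c) := hc ▸ hR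
  have hxc : xt - c ≠ 0 := by
    intro h
    rw [h, div_zero] at hcpos
    exact lt_irrefl 0 hcpos
  -- clear denominators in hc
  have hxz : xt - z ≠ 0 := by intro h; nlinarith
  have hayt' : -xt - yt ≠ 0 := ne_of_gt hayt
  have hy' : y ≠ 0 := ne_of_gt hy
  have h1y' : (1 : ℝ) - y ≠ 0 := ne_of_gt h1y
  have hE0 := hc
  field_simp at hE0
  have hc2 : (c - yt) * ((xt - z) * (-xt - yt) * y * (1 - y))
      = (z - y) * yt * (-xt - y) * (1 - yt) * (xt - c) := by
    linear_combination hE0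
  -- hc2 : (c - yt) * ((xt - z) * (-xt - yt) * y * (1 - y))
  --     = (z - y) * yt * (-xt - y) * (1 - yt) * (xt - c)
  set D1 : ℝ := (xt - z) * (-xt - yt) * y * (1 - y) with hD1def
  set N1 : ℝ := (z - y) * yt * (-xt - y) * (1 - yt) with hN1def
  have hD1neg : D1 < 0 := by
    have : 0 < (z - xt) * (-xt - yt) * y * (1 - y) := by positivity
    rw [hD1def]; nlinarith
  have hN1neg : N1 < 0 := by
    have : 0 < (y - z) * yt * (-xt - y) * (1 - yt) := by positivity
    rw [hN1def]; nlinarith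
  have hDN : D1 + N1 < 0 := by linarith
  -- key inequality Q
  have hq1 : (1 - y) * (-xt - yt) < (-xt - y) * (1 - yt) := by nlinarith [mul_pos (sub_pos.2 hyyt) (by linarith : (0:ℝ) < 1 + xt)]
  have hq2 : y * (z - xt) ≤ (-xt) * y + z * yt := by nlinarith [mul_nonneg hz0 (le_of_lt (sub_pos.2 hyyt))]
  have hApos : 0 < (-xt - y) * (1 - yt) := by positivity
  have hDdpos : 0 < y * (z - xt) := by positivity
  have hQ : y * (1 - y) * (z - xt) * (-xt - yt) < (-xt - y) * (1 - yt) * ((-xt) * y + z * yt) := by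
    have h5 : (1 - y) * (-xt - yt) * (y * (z - xt)) < (-xt - y) * (1 - yt) * (y * (z - xt)) :=
      mul_lt_mul_of_pos_right hq1 hDdpos
    have h6 : (-xt - y) * (1 - yt) * (y * (z - xt)) ≤ (-xt - y) * (1 - yt) * ((-xt) * y + z * yt) :=
      mul_le_mul_of_nonneg_left hq2 (le_of_lt hApos)
    nlinarith [h5, h6]
  -- c * y < z * yt
  have hP1 : 0 < y * (yt * D1 + N1 * xt) - z * yt * (D1 + N1) := by
    have hid : y * (yt * D1 + N1 * xt) - z * yt * (D1 + N1)
        = yt * (y - z) * ((-xt - y) * (1 - yt) * ((-xt) * y + z * yt)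
          - y * (1 - y) * (z - xt) * (-xt - yt)) := by
      rw [hD1def, hN1def]; ring
    rw [hid]
    have : 0 < (-xt - y) * (1 - yt) * ((-xt) * y + z * yt)
        - y * (1 - y) * (z - xt) * (-xt - yt) := by linarith
    positivity
  have hkey1eq : (c * y - z * yt) * (D1 + N1) = y * (yt * D1 + N1 * xt) - z * yt * (D1 + N1) := by
    linear_combination y * hc2
  have hkey1 : c * y < z * yt := by nlinarith [hkey1eq, hP1, hDN]
  -- yt + c > 0
  have hbr : (y - z) * (-xt - y) * (1 - yt) < 2 * (z - xt) * y * (1 - y) := by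
    have h7 : (y - z) * (-xt - y) ≤ y * (z - xt) := by nlinarith
    have h8 : y * (z - xt) * (1 - yt) < y * (z - xt) * (2 * (1 - y)) := by
      apply mul_lt_mul_of_pos_left _ hDdpos
      linarith
    nlinarith [mul_le_mul_of_nonneg_right h7 (le_of_lt h1yt)]
  have hP2 : 2 * yt * D1 + N1 * (yt + xt) < 0 := by
    have hid : 2 * yt * D1 + N1 * (yt + xt)
        = yt * (-xt - yt) * ((y - z) * (-xt - y) * (1 - yt) - 2 * (z - xt) * y * (1 - y)) := by
      rw [hD1def, hN1def]; ring
    rw [hid]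
    have hb : (y - z) * (-xt - y) * (1 - yt) - 2 * (z - xt) * y * (1 - y) < 0 := by linarith
    have : 0 < yt * (-xt - yt) := by positivity
    nlinarith
  have hkey2eq : (yt + c) * (D1 + N1) = 2 * yt * D1 + N1 * (yt + xt) := by
    linear_combination hc2
  have hkey2 : 0 < yt + c := by nlinarith [hkey2eq, hP2, hDN]
  -- conclude
  have hrw1 : (c - yt) / (-yt - c) = (yt - c) / (yt + c) := by
    rw [show c - yt = -(yt - c) by ring, show -yt - c = -(yt + c) by ring, neg_div_neg_eq]
  have hrw2 : (z - y) / (-y - z) = (y - z) / (y + z) := by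
    rw [show z - y = -(y - z) by ring, show -y - z = -(y + z) by ring, neg_div_neg_eq]
  rw [gt_iff_lt, hrw1, hrw2, div_lt_div_iff₀ (by linarith : (0:ℝ) < y + z) hkey2]
  linarith [hkey1]
end

section
/- Let α > 1 and h(x) = x^α. For p, q, x with 0 < p < x < q, define the Poincaré coordinate p_{p,q}(x) = ln((x−p)/(q−x)) and the conjugated map h̄_{p,q}(t) = p_{h(p),h(q)}(h(p_{p,q}^{-1}(t))). Then h̄_{p,q} is strictly increasing in t, and for any two points x < x' in (p,q), h̄_{p,q}(p_{p,q}(x')) − h̄_{p,q}(p_{p,q}(x)) > p_{p,q}(x') − p_{p,q}(x); i.e., h expands the Poincaré metric of any subinterval of (0,∞). -/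
/-- Poincaré coordinate of `x` in the oriented interval `(p,q)`. -/
noncomputable def pc (p q x : ℝ) : ℝ := Real.log ((x - p) / (q - x))

lemma lemA {s : ℝ} (hs : 0 < s) : Real.sinh s < s * Real.cosh s := by
  have H : StrictMonoOn (fun u : ℝ => u * Real.cosh u - Real.sinh u) (Set.Ici 0) := by
    apply strictMonoOn_of_deriv_pos (convex_Ici 0)
    · fun_prop
    · intro u hu
      rw [interior_Ici, Set.mem_Ioi] at hu
      have h1 : HasDerivAt (fun u : ℝ => u * Real.cosh u - Real.sinh u)
          (1 * Real.cosh u + u * Real.sinh u - Real.cosh u) u :=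
        ((hasDerivAt_id u).mul (Real.hasDerivAt_cosh u)).sub (Real.hasDerivAt_sinh u)
      rw [h1.deriv]
      have := Real.sinh_pos_iff.mpr hu
      nlinarith
  have := H (Set.self_mem_Ici) (Set.mem_Ici.mpr hs.le) hs
  simpa using this

lemma lemB {s t : ℝ} (hs : 0 < s) (hst : s < t) : t * Real.sinh s < s * Real.sinh t := by
  have H : StrictMonoOn (fun u : ℝ => Real.sinh u / u) (Set.Icc s t) := by
    apply strictMonoOn_of_deriv_pos (convex_Icc s t)
    · apply ContinuousOn.div (by fun_prop) (by fun_prop)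
      intro u hu; exact (hs.trans_le hu.1).ne'
    · intro u hu
      rw [interior_Icc] at hu
      have hu0 : 0 < u := hs.trans hu.1
      have h1 : HasDerivAt (fun u : ℝ => Real.sinh u / u)
          ((Real.cosh u * u - Real.sinh u * 1) / (u ^ 2)) u :=
        (Real.hasDerivAt_sinh u).div (hasDerivAt_id u) hu0.ne'
      rw [h1.deriv]
      have := lemA hu0
      apply div_pos (by nlinarith) (by positivity)
  have := H (Set.mem_Icc.mpr ⟨le_refl s, hst.le⟩) (Set.mem_Icc.mpr ⟨hst.le, le_refl t⟩) hst
  have ht0 : 0 < t := hs.trans hst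
  rw [div_lt_div_iff₀ hs ht0] at this
  linarith

lemma lemC {a b : ℝ} (ha : 0 < a) (hab : a < b) :
    a * Real.cosh a * Real.sinh b < b * Real.cosh b * Real.sinh a := by
  have h := lemB (s := b - a) (t := a + b) (by linarith) (by linarith)
  rw [Real.sinh_sub, Real.sinh_add] at h
  nlinarith

lemma lemD {U V α : ℝ} (hV : 0 < V) (hUV : V < U) (hα : 1 < α) :
    Real.sinh U * Real.sinh (α * V) < Real.sinh (α * U) * Real.sinh V := by
  have hU : 0 < U := hV.trans hUV
  have H : StrictMonoOn (fun t : ℝ => Real.log (Real.sinh (U * t)) - Real.log (Real.sinh (V * t)))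
      (Set.Icc 1 α) := by
    apply strictMonoOn_of_deriv_pos (convex_Icc 1 α)
    · apply ContinuousOn.sub
      · apply ContinuousOn.log (by fun_prop)
        intro t ht
        exact (Real.sinh_pos_iff.mpr (by nlinarith [ht.1] : (0:ℝ) < U * t)).ne'
      · apply ContinuousOn.log (by fun_prop)
        intro t ht
        exact (Real.sinh_pos_iff.mpr (by nlinarith [ht.1] : (0:ℝ) < V * t)).ne'
    · intro t ht
      rw [interior_Icc] at ht
      have ht1 : (1:ℝ) < t := ht.1
      have hVt : 0 < V * t := by nlinarith
      have hUt : 0 < U * t := by nlinarith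
      have hsV := Real.sinh_pos_iff.mpr hVt
      have hsU := Real.sinh_pos_iff.mpr hUt
      have h1 : HasDerivAt (fun t : ℝ => Real.log (Real.sinh (U * t)) - Real.log (Real.sinh (V * t)))
          (Real.cosh (U * t) * (U * 1) / Real.sinh (U * t)
            - Real.cosh (V * t) * (V * 1) / Real.sinh (V * t)) t := by
        apply HasDerivAt.sub
        · exact ((Real.hasDerivAt_sinh (U * t)).comp t ((hasDerivAt_id t).const_mul U)).log hsU.ne'
        · exact ((Real.hasDerivAt_sinh (V * t)).comp t ((hasDerivAt_id t).const_mul V)).log hsV.ne'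
      rw [h1.deriv]
      rw [sub_pos, div_lt_div_iff₀ hsV hsU]
      have h2 := lemC hVt (by nlinarith : V * t < U * t)
      nlinarith
  have h := H (Set.mem_Icc.mpr ⟨le_refl 1, hα.le⟩) (Set.mem_Icc.mpr ⟨hα.le, le_refl α⟩) hα
  simp only [mul_one] at h
  rw [mul_comm U α, mul_comm V α] at h
  have hsV := Real.sinh_pos_iff.mpr hV
  have hsU := Real.sinh_pos_iff.mpr hU
  have hsaV := Real.sinh_pos_iff.mpr (by nlinarith : (0:ℝ) < α * V)
  have hsaU := Real.sinh_pos_iff.mpr (by nlinarith : (0:ℝ) < α * U)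
  have h2 : Real.log (Real.sinh U * Real.sinh (α * V)) < Real.log (Real.sinh (α * U) * Real.sinh V) := by
    rw [Real.log_mul hsU.ne' hsaV.ne', Real.log_mul hsaU.ne' hsV.ne']
    linarith
  exact (Real.log_lt_log_iff (by positivity) (by positivity)).mp h2

lemma lemE {u v : ℝ} (hu : 0 < u) (huv : u < v) (t : ℝ) :
    v ^ t - u ^ t =
      Real.exp (t * ((Real.log u + Real.log v) / 2)) *
        (2 * Real.sinh (t * ((Real.log v - Real.log u) / 2))) := by
  have hv : 0 < v := hu.trans huv
  rw [Real.rpow_def_of_pos hu, Real.rpow_def_of_pos hv, Real.sinh_eq]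
  set m := t * ((Real.log u + Real.log v) / 2) with hm
  set d := t * ((Real.log v - Real.log u) / 2) with hd
  have h1 : Real.exp m * (2 * ((Real.exp d - Real.exp (-d)) / 2))
      = Real.exp (m + d) - Real.exp (m + -d) := by
    rw [Real.exp_add, Real.exp_add]; ring
  rw [h1]
  have h2 : m + d = Real.log v * t := by rw [hm, hd]; ring
  have h3 : m + -d = Real.log u * t := by rw [hm, hd]; ring
  rw [h2, h3]

lemma keyF (p q x x' t : ℝ) (hp : 0 < p) (hpx : p < x) (hxx' : x < x') (hq : x' < q)
    (ht : 0 < t) :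
    pc (p ^ t) (q ^ t) (x' ^ t) - pc (p ^ t) (q ^ t) (x ^ t)
      = (Real.log (Real.sinh (t * ((Real.log x' - Real.log p) / 2)))
          - Real.log (Real.sinh (t * ((Real.log x - Real.log p) / 2))))
        + (Real.log (Real.sinh (t * ((Real.log q - Real.log x) / 2)))
          - Real.log (Real.sinh (t * ((Real.log q - Real.log x') / 2)))) := by
  have hx0 : 0 < x := hp.trans hpx
  have hx'0 : 0 < x' := hx0.trans hxx'
  have hq0 : 0 < q := hx'0.trans hq
  have L : ∀ u v : ℝ, 0 < u → u < v →
      Real.log (v ^ t - u ^ t) = t * ((Real.log u + Real.log v) / 2) + Real.log 2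
        + Real.log (Real.sinh (t * ((Real.log v - Real.log u) / 2))) := by
    intro u v hu huv
    have hlog := Real.log_lt_log hu huv
    have hs : 0 < Real.sinh (t * ((Real.log v - Real.log u) / 2)) :=
      Real.sinh_pos_iff.mpr (by nlinarith)
    rw [lemE hu huv t, Real.log_mul (Real.exp_ne_zero _) (by positivity), Real.log_exp,
      Real.log_mul two_ne_zero hs.ne']
    ring
  have d1 : (0:ℝ) < x' ^ t - p ^ t := sub_pos.mpr (Real.rpow_lt_rpow hp.le (hpx.trans hxx') ht)
  have d2 : (0:ℝ) < q ^ t - x' ^ t := sub_pos.mpr (Real.rpow_lt_rpow hx'0.le hq ht)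
  have d3 : (0:ℝ) < x ^ t - p ^ t := sub_pos.mpr (Real.rpow_lt_rpow hp.le hpx ht)
  have d4 : (0:ℝ) < q ^ t - x ^ t := sub_pos.mpr (Real.rpow_lt_rpow hx0.le (hxx'.trans hq) ht)
  simp only [pc]
  rw [Real.log_div d1.ne' d2.ne', Real.log_div d3.ne' d4.ne',
    L p x' hp (hpx.trans hxx'), L x' q hx'0 hq, L p x hp hpx, L x q hx0 (hxx'.trans hq)]
  ring

theorem stmt13 (α p q x x' : ℝ) (hα : 1 < α)
    (hp : 0 < p) (hpx : p < x) (hxx' : x < x') (hq : x' < q) :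
    pc (p ^ α) (q ^ α) (x' ^ α) - pc (p ^ α) (q ^ α) (x ^ α)
      > pc p q x' - pc p q x := by
  have hx0 : 0 < x := hp.trans hpx
  have hx'0 : 0 < x' := hx0.trans hxx'
  have hq0 : 0 < q := hx'0.trans hq
  have k1 := keyF p q x x' 1 hp hpx hxx' hq one_pos
  simp only [Real.rpow_one, one_mul] at k1
  have kα := keyF p q x x' α hp hpx hxx' hq (by linarith)
  rw [kα, k1]
  have pair : ∀ U V : ℝ, 0 < V → V < U →
      Real.log (Real.sinh U) - Real.log (Real.sinh V)
        < Real.log (Real.sinh (α * U)) - Real.log (Real.sinh (α * V)) := by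
    intro U V hV hUV
    have hU : 0 < U := hV.trans hUV
    have h := lemD hV hUV hα
    have hsV := Real.sinh_pos_iff.mpr hV
    have hsU := Real.sinh_pos_iff.mpr hU
    have hsaV := Real.sinh_pos_iff.mpr (show (0:ℝ) < α * V by nlinarith)
    have hsaU := Real.sinh_pos_iff.mpr (show (0:ℝ) < α * U by nlinarith)
    have h2 := Real.log_lt_log (by positivity) h
    rw [Real.log_mul hsU.ne' hsaV.ne', Real.log_mul hsaU.ne' hsV.ne'] at h2
    linarith
  have hl1 := Real.log_lt_log hp hpx
  have hl2 := Real.log_lt_log hx0 hxx'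
  have hl3 := Real.log_lt_log hx'0 hq
  have p1 := pair ((Real.log x' - Real.log p) / 2) ((Real.log x - Real.log p) / 2)
    (by linarith) (by linarith)
  have p2 := pair ((Real.log q - Real.log x) / 2) ((Real.log q - Real.log x') / 2)
    (by linarith) (by linarith)
  linarith
end

section
/- Let α > 1 and f_a(x) = −|x|^α + a with a > 1. After rescaling so that the critical value is 1 (i.e. normalizing n_a ↦ n_a/a), for parameters with 2_a := f_a²(0)/a ∈ (−1,0) and 3_a := f_a³(0)/a (rescaled) ∈ (0,1) and 4_a ∈ (2_a, −2_a), the function g(t) = p_{2_a,−2_a}(4_a), viewed as a function of t = p_{1,−1}(2_a), is strictly increasing with g'(t) > 1. In particular the value g(t) = 0 (the super-stable orbit with kneading sequence RLRC) is attained for exactly one parameter. -/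
/-- The quasi-quadratic power-law map `x ↦ -|x|^α + a`. -/
noncomputable def f (α a : ℝ) : ℝ → ℝ := fun x => -|x| ^ α + a

/-- The `n`-th point of the post-critical orbit, rescaled so that `1_a = 1`. -/
noncomputable def orb (α a : ℝ) (n : ℕ) : ℝ := (f α a)^[n] 0 / a

/-- Admissible parameters: `a > 1`, rescaled `2_a ∈ (-1,0)`, `3_a ∈ (0,1)` and
`4_a ∈ (2_a, -2_a)`. -/
def Adm (α a : ℝ) : Prop :=
  1 < a ∧ orb α a 2 ∈ Set.Ioo (-1 : ℝ) 0 ∧ orb α a 3 ∈ Set.Ioo (0 : ℝ) 1 ∧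
    orb α a 4 ∈ Set.Ioo (orb α a 2) (-(orb α a 2))

/-- The parameter coordinate `t = p_{1,-1}(2_a)`. -/
noncomputable def tcoord (α a : ℝ) : ℝ := pc 1 (-1) (orb α a 2)

/-- The function `g(t) = p_{2_a,-2_a}(4_a)`. -/
noncomputable def g (α a : ℝ) : ℝ := pc (orb α a 2) (-(orb α a 2)) (orb α a 4)

open Real Set Filter Topology

noncomputable def vv (α u : ℝ) : ℝ := (1+u) * u ^ α
noncomputable def ww (α u : ℝ) : ℝ := (1+u) * (1 - vv α u) ^ α
noncomputable def TT (u : ℝ) : ℝ := Real.log ((1+u)/(1-u))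
noncomputable def GG (α u : ℝ) : ℝ := Real.log ((1+u-ww α u)/(ww α u - (1-u)))
def Reg (α u : ℝ) : Prop := 0 < u ∧ u < 1 ∧ vv α u < 1 ∧ 1 - u < ww α u
noncomputable def dv (α u : ℝ) : ℝ := 1 * u ^ α + (1+u) * (α * u ^ (α-1))
noncomputable def dw (α u : ℝ) : ℝ :=
  1 * (1 - vv α u) ^ α + (1+u) * (-dv α u * α * (1 - vv α u) ^ (α-1))

lemma hasDerivAt_vv {α u : ℝ} (hu : 0 < u) : HasDerivAt (vv α) (dv α u) u := by
  have h1 : HasDerivAt (fun x : ℝ => 1 + x) 1 u := (hasDerivAt_id u).const_add 1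
  have h2 : HasDerivAt (fun x : ℝ => x ^ α) (α * u ^ (α-1)) u :=
    Real.hasDerivAt_rpow_const (Or.inl hu.ne')
  exact h1.mul h2

lemma hasDerivAt_ww {α u : ℝ} (hu : 0 < u) (hv : vv α u < 1) :
    HasDerivAt (ww α) (dw α u) u := by
  have h1 : HasDerivAt (fun x : ℝ => 1 + x) 1 u := (hasDerivAt_id u).const_add 1
  have hvd : HasDerivAt (fun x : ℝ => 1 - vv α x) (-dv α u) u := by
    simpa using (hasDerivAt_vv (α := α) hu).const_sub 1
  have h2 : HasDerivAt (fun x : ℝ => (1 - vv α x) ^ α) (-dv α u * α * (1 - vv α u) ^ (α-1)) u :=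
    hvd.rpow_const (Or.inl (by linarith))
  exact h1.mul h2

lemma vv_pos {α u : ℝ} (hu : 0 < u) : 0 < vv α u :=
  mul_pos (by linarith) (Real.rpow_pos_of_pos hu α)

lemma vv_mono {α : ℝ} (hα : 0 < α) {x y : ℝ} (hx : 0 ≤ x) (hxy : x < y) :
    vv α x < vv α y := by
  have hy : 0 < y := lt_of_le_of_lt hx hxy
  have h1 : x ^ α < y ^ α := Real.rpow_lt_rpow hx hxy hα
  have h2 : (0:ℝ) ≤ x ^ α := Real.rpow_nonneg hx α
  have : (0:ℝ) < 1 + x := by linarith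
  unfold vv; nlinarith [Real.rpow_pos_of_pos hy α]

lemma ww_pos {α u : ℝ} (hu : 0 < u) (hv : vv α u < 1) : 0 < ww α u :=
  mul_pos (by linarith) (Real.rpow_pos_of_pos (by linarith) α)

lemma ww_lt {α u : ℝ} (hα : 0 < α) (hu : 0 < u) (hv : vv α u < 1) : ww α u < 1 + u := by
  have h0 : 0 < 1 - vv α u := by linarith
  have h1 : (1 - vv α u) ^ α < 1 :=
    Real.rpow_lt_one h0.le (by have := vv_pos (α := α) hu; linarith) hα
  have : (0:ℝ) < 1 + u := by linarith
  unfold ww; nlinarith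

lemma Kpos {α u : ℝ} (hα : 1 < α) (hu : 0 < u) (hu1 : u < 1) :
    0 < α * (1 - u^2) + (1+u)^2 * u ^ α - (1 + u^2) := by
  have hber : 1 + α * (u - 1) < u ^ α := by
    have := one_add_mul_self_lt_rpow_one_add (s := u - 1) (by linarith) (by linarith)
      (p := α) hα
    convert this using 2
    ring_nf
  have hup : 0 < u ^ α := Real.rpow_pos_of_pos hu α
  rcases le_or_gt (α * (1 - u^2)) 2 with h | h
  · nlinarith
  · nlinarith

lemma split_rpow {x β : ℝ} (hx : 0 < x) : x ^ β = x ^ (β-1) * x := by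
  nth_rewrite 1 [show β = (β-1)+1 by ring]
  rw [Real.rpow_add_one (ne_of_gt hx)]

lemma dw_neg {α u : ℝ} (hα : 1 < α) (hu : 0 < u) (hu1 : u < 1) (hv : vv α u < 1)
    (hw : ww α u = 1 - u) : dw α u < -1 := by
  set v := vv α u with hvdef
  have hv0 : 0 < v := vv_pos hu
  have hU : 0 < u ^ (α-1) := Real.rpow_pos_of_pos hu _
  have hP' : 0 < (1-v) ^ (α-1) := Real.rpow_pos_of_pos (by linarith) _
  set U := u ^ (α-1) with hUdef
  set P' := (1-v) ^ (α-1) with hPdef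
  have hUu : u ^ α = U * u := split_rpow hu
  have hPP : (1-v) ^ α = P' * (1-v) := split_rpow (by linarith)
  have hvU : v = (1+u) * (U * u) := by rw [hvdef]; unfold vv; rw [hUu]
  have hber : 1 + α * (-v) ≤ (1-v) ^ α := by
    have := one_add_mul_self_le_rpow_one_add (s := -v) (by linarith) (le_of_lt hα)
    convert this using 2
    ring
  have hw' : (1+u) * (P' * (1-v)) = 1 - u := by rw [← hPP]; exact hw
  have hK := Kpos hα hu hu1
  have e1 : 2 ≤ α * U * (1+u)^2 := by
    rw [hPP] at hber
    refine le_of_mul_le_mul_right ?_ hu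
    nlinarith [mul_le_mul_of_nonneg_left hber (show (0:ℝ) ≤ 1+u by linarith)]
  have hB : (1+u) * (1-v) < (1-u) * (u + α*(1+u)) := by nlinarith
  have e2 : 1 < P' * (u + α*(1+u)) := by
    have h3 : P' * (u + α*(1+u)) * ((1+u) * (1-v)) = (u + α*(1+u)) * ((1+u) * (P' * (1-v))) := by
      ring
    rw [hw'] at h3
    have h4 : (0:ℝ) < (1+u) * (1-v) := by nlinarith
    rw [← mul_lt_mul_iff_of_pos_right h4, one_mul, h3]
    nlinarith
  have e3 : 2 < α * (1+u)^2 * (P' * dv α u) := by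
    have hdv : dv α u = U * (u + α*(1+u)) := by unfold dv; rw [hUu]; ring
    rw [hdv]
    have : α * (1+u)^2 * (P' * (U * (u + α*(1+u)))) =
        (α * U * (1+u)^2) * (P' * (u + α*(1+u))) := by ring
    rw [this]
    nlinarith
  have hdw : dw α u = P' * (1-v) + (1+u) * (-dv α u * α * P') := by
    unfold dw; rw [hPP, ← hvdef]; ring
  have h1u : (0:ℝ) < 1 + u := by linarith
  rw [hdw, ← mul_lt_mul_iff_of_pos_left h1u]
  calc (1+u) * (P' * (1-v) + (1+u) * (-dv α u * α * P'))
      = (1+u) * (P' * (1-v)) - α * (1+u)^2 * (P' * dv α u) := by ring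
    _ < (1-u) - 2 := by rw [hw']; linarith
    _ ≤ (1+u) * (-1) := by linarith

/-- Numerator positivity for `F' > 0`. -/
lemma NN_pos {α u : ℝ} (hα : 1 < α) (hu : 0 < u) (hu1 : u < 1) (hv : vv α u < 1)
    (hw : 1 - u < ww α u) :
    0 < ((ww α u - 1) - u * dw α u) * ((1+u)*(1-u))
        - (1+u-ww α u) * (ww α u - (1-u)) := by
  set v := vv α u with hvdef
  have hv0 : 0 < v := vv_pos hu
  have hU : 0 < u ^ (α-1) := Real.rpow_pos_of_pos hu _
  have hP' : 0 < (1-v) ^ (α-1) := Real.rpow_pos_of_pos (by linarith) _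
  set U := u ^ (α-1) with hUdef
  set P' := (1-v) ^ (α-1) with hPdef
  have hUu : u ^ α = U * u := split_rpow hu
  have hPP : (1-v) ^ α = P' * (1-v) := split_rpow (by linarith)
  have hvU : v = (1+u) * (U * u) := by rw [hvdef]; unfold vv; rw [hUu]
  have hber : 1 + α * (-v) < (1-v) ^ α := by
    have := one_add_mul_self_lt_rpow_one_add (s := -v) (by linarith) (by linarith) (p := α) hα
    convert this using 2
    ring
  rw [hPP] at hber
  have hK := Kpos hα hu hu1
  have hB : (1+u) * (1-v) < (1-u) * (u + α*(1+u)) := by nlinarith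
  have hdv : dv α u = U * (u + α*(1+u)) := by unfold dv; rw [hUu]; ring
  have hww' : ww α u = (1+u) * (P' * (1-v)) := by rw [← hPP]; rfl
  have hdw : dw α u = P' * (1-v) + (1+u) * (-(U * (u + α*(1+u))) * α * P') := by
    unfold dw; rw [hPP, ← hvdef, hdv]; ring
  set P : ℝ := P' * (1-v) with hPdef2
  have hPpos : 0 < P := mul_pos hP' (by linarith)
  rw [hww', hdw]
  have hident : ((1+u) * P - 1 - u * (P + (1+u) * (-(U * (u + α*(1+u))) * α * P'))) * ((1+u)*(1-u))
      - (1+u-(1+u)*P) * ((1+u)*P - (1-u))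
      = (1+u)^2 * (α * u * (1-u) * P' * (U * (u + α*(1+u))) - P + P^2) := by
    rw [hPdef2]; ring
  have hgoal : 0 < (1+u)^2 * (α * u * (1-u) * P' * (U * (u + α*(1+u))) - P + P^2) := by
    have hKs : v * (1-v) < u * (1-u) * (U * (u + α*(1+u))) := by
      have h5 := mul_lt_mul_of_pos_left hB (mul_pos hU hu)
      have hv2 : v * (1-v) = (U*u) * ((1+u)*(1-v)) := by rw [hvU]; ring
      rw [hv2]
      exact lt_of_lt_of_le h5 (le_of_eq (by ring))
    have c1 : α * P' * (v * (1-v)) < α * P' * (u * (1-u) * (U * (u + α*(1+u)))) := by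
      have : 0 < α * P' := by positivity
      exact mul_lt_mul_of_pos_left hKs this
    have c2 : α * P' * (v * (1-v)) = α * v * P := by rw [hPdef2]; ring
    have c3 : (1 - P) * P < α * v * P := by
      have : 1 - P < α * v := by rw [hPdef2]; linarith
      exact mul_lt_mul_of_pos_right this hPpos
    nlinarith
  calc (0:ℝ) < _ := hgoal
    _ = _ := hident.symm

noncomputable def DD (α u : ℝ) : ℝ :=
  (1 - dw α u)/(1+u-ww α u) - (dw α u + 1)/(ww α u - (1-u)) - (1/(1+u) + 1/(1-u))

lemma hasDerivAt_TT {u : ℝ} (hu0 : 0 < u) (hu1 : u < 1) :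
    HasDerivAt TT (1/(1+u) + 1/(1-u)) u := by
  have h1 : HasDerivAt (fun x : ℝ => Real.log (1+x)) (1/(1+u)) u := by
    simpa using ((hasDerivAt_id u).const_add 1).log (by linarith : (1:ℝ)+u ≠ 0)
  have h2 : HasDerivAt (fun x : ℝ => Real.log (1-x)) ((-1)/(1-u)) u := by
    simpa using ((hasDerivAt_id u).const_sub 1).log (by linarith : (1:ℝ)-u ≠ 0)
  have h := h1.sub h2
  have h' : HasDerivAt (fun x : ℝ => Real.log (1+x) - Real.log (1-x))
      (1/(1+u) + 1/(1-u)) u := by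
    exact h.congr_deriv (by ring)
  refine h'.congr_of_eventuallyEq ?_
  have hev : ∀ᶠ x in 𝓝 u, x ∈ Ioo (-1:ℝ) 1 :=
    isOpen_Ioo.eventually_mem (by constructor <;> linarith)
  filter_upwards [hev] with x hx
  unfold TT
  rw [Real.log_div (by linarith [hx.1] : (1:ℝ)+x ≠ 0) (by linarith [hx.2] : (1:ℝ)-x ≠ 0)]

lemma hasDerivAt_GG {α u : ℝ} (hα : 1 < α) (hreg : Reg α u) :
    HasDerivAt (GG α) ((1 - dw α u)/(1+u-ww α u) - (dw α u + 1)/(ww α u - (1-u))) u := by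
  obtain ⟨hu0, hu1, hv, hw⟩ := hreg
  have hww := hasDerivAt_ww (α := α) hu0 hv
  have hA : HasDerivAt (fun x => 1+x-ww α x) (1 - dw α u) u :=
    ((hasDerivAt_id u).const_add 1).sub hww
  have hB : HasDerivAt (fun x => ww α x - (1-x)) (dw α u + 1) u := by
    have := hww.sub ((hasDerivAt_id u).const_sub 1)
    exact this.congr_deriv (by ring)
  have hApos : 0 < 1+u-ww α u := by
    have := ww_lt (by linarith : (0:ℝ) < α) hu0 hv; linarith
  have hBpos : 0 < ww α u - (1-u) := by linarith
  have h := (hA.log hApos.ne').sub (hB.log hBpos.ne')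
  refine h.congr_of_eventuallyEq ?_
  have hAev : ∀ᶠ x in 𝓝 u, 0 < 1+x-ww α x :=
    hA.continuousAt.eventually (eventually_gt_nhds hApos)
  have hBev : ∀ᶠ x in 𝓝 u, 0 < ww α x - (1-x) :=
    hB.continuousAt.eventually (eventually_gt_nhds hBpos)
  filter_upwards [hAev, hBev] with x h1 h2
  unfold GG
  rw [Real.log_div h1.ne' h2.ne']
  rfl

lemma DD_pos {α u : ℝ} (hα : 1 < α) (hreg : Reg α u) : 0 < DD α u := by
  obtain ⟨hu0, hu1, hv, hw⟩ := hreg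
  have hApos : 0 < 1+u-ww α u := by
    have := ww_lt (by linarith : (0:ℝ) < α) hu0 hv; linarith
  have hBpos : 0 < ww α u - (1-u) := by linarith
  have h1u : (0:ℝ) < 1+u := by linarith
  have h2u : (0:ℝ) < 1-u := by linarith
  have hNN := NN_pos hα hu0 hu1 hv hw
  have key : DD α u * ((1+u-ww α u) * (ww α u - (1-u)) * ((1+u)*(1-u)))
      = 2 * (((ww α u - 1) - u * dw α u) * ((1+u)*(1-u))
        - (1+u-ww α u) * (ww α u - (1-u))) := by
    unfold DD
    field_simp
    ring
  have hbig : 0 < (1+u-ww α u) * (ww α u - (1-u)) * ((1+u)*(1-u)) := by positivity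
  by_contra hD
  push_neg at hD
  nlinarith [mul_nonneg (neg_nonneg.mpr hD) hbig.le]

lemma Reg_Icc {α u1 u2 x : ℝ} (hα : 1 < α) (h1 : Reg α u1) (h2 : Reg α u2)
    (hx : x ∈ Icc u1 u2) : Reg α x := by
  obtain ⟨h10, h11, h1v, h1w⟩ := h1
  obtain ⟨h20, h21, h2v, h2w⟩ := h2
  obtain ⟨hx1, hx2⟩ := hx
  have hx0 : 0 < x := lt_of_lt_of_le h10 hx1
  have hx1' : x < 1 := lt_of_le_of_lt hx2 h21
  have hαpos : (0:ℝ) < α := by linarith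
  have hxv : vv α x < 1 := by
    rcases eq_or_lt_of_le hx2 with h | h
    · rwa [h]
    · exact lt_trans (vv_mono hαpos hx0.le h) h2v
  refine ⟨hx0, hx1', hxv, ?_⟩
  by_contra hcon
  push_neg at hcon
  -- ww α x ≤ 1 - x ; so x < u2
  have hxu2 : x < u2 := by
    rcases eq_or_lt_of_le hx2 with h | h
    · exfalso; rw [h] at hcon; linarith
    · exact h
  set φ : ℝ → ℝ := fun y => ww α y + y with hφ
  have hφd : ∀ y ∈ Icc x u2, HasDerivAt φ (dw α y + 1) y := by
    intro y ⟨hy1, hy2⟩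
    have hy0 : 0 < y := lt_of_lt_of_le hx0 hy1
    have hyv : vv α y < 1 := by
      rcases eq_or_lt_of_le hy2 with h | h
      · rwa [h]
      · exact lt_trans (vv_mono hαpos hy0.le h) h2v
    exact (hasDerivAt_ww hy0 hyv).add (hasDerivAt_id y)
  set C : Set ℝ := {y | y ∈ Icc x u2 ∧ φ y ≤ 1} with hC
  have hCne : C.Nonempty := ⟨x, ⟨le_refl x, hxu2.le⟩, by simp only [hφ]; linarith⟩
  have hCbdd : BddAbove C := ⟨u2, fun y hy => hy.1.2⟩
  have hCclosed : IsClosed C := by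
    have hcont : ContinuousOn φ (Icc x u2) := fun y hy => (hφd y hy).continuousAt.continuousWithinAt
    have : C = Icc x u2 ∩ φ ⁻¹' (Iic 1) := by ext y; simp [hC, and_comm]
    rw [this]
    exact hcont.preimage_isClosed_of_isClosed isClosed_Icc isClosed_Iic
  set c := sSup C with hc
  have hcC : c ∈ C := hCclosed.csSup_mem hCne hCbdd
  have hcIcc : c ∈ Icc x u2 := hcC.1
  have hφc : φ c ≤ 1 := hcC.2
  have hc0 : 0 < c := lt_of_lt_of_le hx0 hcIcc.1
  have hcu2 : c < u2 := by
    rcases eq_or_lt_of_le hcIcc.2 with h | h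
    · exfalso; rw [hφ] at hφc; simp only at hφc; rw [h] at hφc; linarith
    · exact h
  have hcv : vv α c < 1 := lt_trans (vv_mono hαpos hc0.le hcu2) h2v
  have hgt : ∀ y ∈ Ioc c u2, 1 < φ y := by
    intro y ⟨hy1, hy2⟩
    by_contra hcon2
    push_neg at hcon2
    have : y ∈ C := ⟨⟨le_trans hcIcc.1 hy1.le, hy2⟩, hcon2⟩
    exact absurd (le_csSup hCbdd this) (not_le.mpr hy1)
  have hφceq : φ c = 1 := by
    refine le_antisymm hφc ?_
    have hcont : ContinuousAt φ c := (hφd c hcIcc).continuousAt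
    have htend : Tendsto φ (𝓝[>] c) (𝓝 (φ c)) := hcont.tendsto.mono_left nhdsWithin_le_nhds
    refine ge_of_tendsto htend ?_
    filter_upwards [Ioc_mem_nhdsGT_of_mem ⟨le_refl c, hcu2⟩] with y hy
    exact (hgt y hy).le
  have hwc : ww α c = 1 - c := by rw [hφ] at hφceq; simp only at hφceq; linarith
  have hdwc : dw α c < -1 := dw_neg hα hc0 (lt_trans hcu2 h21) hcv hwc
  -- but slope from the right is nonneg
  have hder : HasDerivAt φ (dw α c + 1) c := hφd c hcIcc
  have hslope : Tendsto (slope φ c) (𝓝[>] c) (𝓝 (dw α c + 1)) :=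
    (hasDerivAt_iff_tendsto_slope.mp hder).mono_left
      (nhdsWithin_mono c (fun y hy => ne_of_gt hy))
  have hge : 0 ≤ dw α c + 1 := by
    refine ge_of_tendsto hslope ?_
    filter_upwards [Ioc_mem_nhdsGT_of_mem ⟨le_refl c, hcu2⟩] with y hy
    rw [slope_def_field]
    have h1 : φ c < φ y := by rw [hφceq]; exact hgt y hy
    have h2 : c < y := hy.1
    exact div_nonneg (by linarith : (0:ℝ) ≤ φ y - φ c) (by linarith : (0:ℝ) ≤ y - c)
  linarith

lemma TT_lt {x y : ℝ} (hx : 0 < x) (hxy : x < y) (hy : y < 1) : TT x < TT y := by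
  unfold TT
  apply Real.log_lt_log (div_pos (by linarith) (by linarith))
  rw [div_lt_div_iff₀ (by linarith) (by linarith)]
  nlinarith

lemma FF_mono {α u1 u2 : ℝ} (hα : 1 < α) (h1 : Reg α u1) (h2 : Reg α u2) (h12 : u1 < u2) :
    GG α u1 - TT u1 < GG α u2 - TT u2 := by
  have hmono : StrictMonoOn (fun x => GG α x - TT x) (Icc u1 u2) := by
    apply strictMonoOn_of_deriv_pos (convex_Icc u1 u2)
    · intro x hx
      have hreg := Reg_Icc hα h1 h2 hx
      exact (((hasDerivAt_GG hα hreg).sub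
        (hasDerivAt_TT hreg.1 hreg.2.1)).continuousAt).continuousWithinAt
    · intro x hx
      rw [interior_Icc] at hx
      have hreg := Reg_Icc hα h1 h2 (Ioo_subset_Icc_self hx)
      have hd := (hasDerivAt_GG hα hreg).sub (hasDerivAt_TT hreg.1 hreg.2.1)
      rw [show deriv (fun x => GG α x - TT x) x = _ from hd.deriv]
      have := DD_pos hα hreg
      unfold DD at this
      linarith
  exact hmono (left_mem_Icc.mpr h12.le) (right_mem_Icc.mpr h12.le) h12

section Bridge
variable {α a : ℝ} (hα : 1 < α) (ha : 1 < a)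

include hα ha

lemma hb1 : 1 < a ^ (α - 1) :=
  Real.one_lt_rpow_iff_of_pos (by linarith) |>.mpr (Or.inl ⟨ha, by linarith⟩)

lemma it1 : (f α a)^[1] 0 = a := by
  simp [f, Real.zero_rpow (by positivity : α ≠ 0)]

lemma it2 : (f α a)^[2] 0 = -(a ^ α) + a := by
  rw [show (2:ℕ) = 1+1 from rfl, Function.iterate_succ_apply', it1 hα ha]
  simp [f, abs_of_pos (by linarith : (0:ℝ) < a)]

lemma haα : a < a ^ α := by
  nth_rewrite 1 [show a = a ^ (1:ℝ) from (Real.rpow_one a).symm]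
  exact Real.rpow_lt_rpow_left_iff ha |>.mpr hα

lemma orb2_eq : orb α a 2 = -(a ^ (α-1) - 1) := by
  unfold orb
  rw [it2 hα ha, Real.rpow_sub (by linarith : (0:ℝ) < a), Real.rpow_one]
  field_simp
  ring

lemma it3 : (f α a)^[3] 0 = -((a * (a ^ (α-1) - 1)) ^ α) + a := by
  rw [show (3:ℕ) = 2+1 from rfl, Function.iterate_succ_apply', it2 hα ha]
  have h1 : -(a ^ α) + a < 0 := by have := haα hα ha; linarith
  have h2 : |(-(a ^ α) + a)| = a * (a ^ (α-1) - 1) := by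
    rw [abs_of_neg h1, Real.rpow_sub (by linarith : (0:ℝ) < a), Real.rpow_one]
    field_simp
    ring
  rw [f, h2]

lemma orb3_eq : orb α a 3 = 1 - vv α (a ^ (α-1) - 1) := by
  have hb := hb1 hα ha
  have h0 : (0:ℝ) < a := by linarith
  unfold orb
  rw [it3 hα ha, Real.mul_rpow h0.le (by linarith : (0:ℝ) ≤ a ^ (α-1) - 1)]
  unfold vv
  have : a ^ α = a * a ^ (α-1) := by
    rw [← Real.rpow_one_add' (by linarith) (by intro h; simp at h; linarith)]
    ring_nf
  rw [this]
  field_simp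
  ring

lemma it4 (h3 : 0 ≤ orb α a 3) : (f α a)^[4] 0 = -((a * orb α a 3) ^ α) + a := by
  have h0 : (0:ℝ) < a := by linarith
  have hfa3 : (f α a)^[3] 0 = a * orb α a 3 := by
    unfold orb; field_simp
  rw [show (4:ℕ) = 3+1 from rfl, Function.iterate_succ_apply', hfa3]
  rw [f, abs_of_nonneg (by positivity)]

lemma orb4_eq (h3 : 0 ≤ orb α a 3) : orb α a 4 = 1 - ww α (a ^ (α-1) - 1) := by
  have hb := hb1 hα ha
  have h0 : (0:ℝ) < a := by linarith
  unfold orb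
  rw [it4 hα ha h3, Real.mul_rpow h0.le h3]
  unfold ww
  rw [← orb3_eq hα ha]
  have : a ^ α = a * a ^ (α-1) := by
    rw [← Real.rpow_one_add' (by linarith) (by intro h; simp at h; linarith)]
    ring_nf
  rw [this]
  field_simp
  ring

lemma tcoord_eq (hu1 : a ^ (α-1) - 1 < 1) : tcoord α a = TT (a ^ (α-1) - 1) := by
  have hb := hb1 hα ha
  set u := a ^ (α-1) - 1 with hu
  unfold tcoord pc TT
  rw [orb2_eq hα ha, ← hu]
  congr 1
  rw [div_eq_div_iff (by linarith) (by linarith)]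
  ring

lemma adm_reg (hAdm : Adm α a) : Reg α (a ^ (α-1) - 1) := by
  obtain ⟨_, h2, h3, h4⟩ := hAdm
  have hb := hb1 hα ha
  set u := a ^ (α-1) - 1 with hu
  have horb2 : orb α a 2 = -u := orb2_eq hα ha
  have hu1 : u < 1 := by
    have := h2.1; rw [horb2] at this; linarith
  have hv : vv α u < 1 := by
    have := h3.1; rw [orb3_eq hα ha, ← hu] at this; linarith
  refine ⟨by linarith, hu1, hv, ?_⟩
  have h34 := orb4_eq hα ha (by rw [orb3_eq hα ha, ← hu]; linarith [h3.1])
  rw [← hu] at h34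
  have := h4.2
  rw [horb2, h34] at this
  linarith

lemma g_eq (hAdm : Adm α a) : g α a = GG α (a ^ (α-1) - 1) := by
  obtain ⟨_, h2, h3, h4⟩ := hAdm
  set u := a ^ (α-1) - 1 with hu
  have horb2 : orb α a 2 = -u := orb2_eq hα ha
  have h34 := orb4_eq hα ha (le_of_lt h3.1)
  rw [← hu] at h34
  unfold g pc GG
  rw [horb2, h34]
  congr 2
  · ring
  · ring

end Bridge

lemma exists_u0 {α : ℝ} (hα : 1 < α) : ∃ u0, Reg α u0 ∧ ww α u0 = 1 := by
  have hαpos : (0:ℝ) < α := by linarith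
  -- u2 with vv u2 = 1/2
  have hcontv : ContinuousOn (vv α) (Icc 0 1) := by
    intro x _
    exact (((continuous_const.add continuous_id).continuousAt).mul
      (Real.continuousAt_rpow_const x α (Or.inr hαpos.le))).continuousWithinAt
  have hv0 : vv α 0 = 0 := by simp [vv, Real.zero_rpow hαpos.ne']
  have hv1 : vv α 1 = 2 := by norm_num [vv]
  have hIVT := intermediate_value_Ioo (by norm_num : (0:ℝ) ≤ 1) hcontv
  have hmem : (1/2 : ℝ) ∈ Ioo (vv α 0) (vv α 1) := by rw [hv0, hv1]; norm_num
  obtain ⟨u2, hu2mem, hu2v⟩ := hIVT hmem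
  -- ww u2 < 1
  have hwu2 : ww α u2 < 1 := by
    have h12 : ((1:ℝ)/2) ^ α < 1/2 := by
      nth_rewrite 2 [show (1/2 : ℝ) = (1/2 : ℝ) ^ (1:ℝ) from (Real.rpow_one _).symm]
      exact Real.rpow_lt_rpow_of_exponent_gt (by norm_num) (by norm_num) hα
    have : ww α u2 = (1+u2) * ((1:ℝ)/2) ^ α := by rw [ww, hu2v]; norm_num
    rw [this]
    nlinarith [hu2mem.2, hu2mem.1]
  -- u1 small with ww u1 > 1
  have htend : Tendsto (fun u : ℝ => α * (1+u)^2 * u ^ (α-1)) (𝓝[>] 0) (𝓝 0) := by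
    have hc : ContinuousAt (fun u : ℝ => α * (1+u)^2 * u ^ (α-1)) 0 := by
      exact (continuousAt_const.mul (((continuous_const.add continuous_id).pow 2).continuousAt)).mul
        (Real.continuousAt_rpow_const 0 (α-1) (Or.inr (by linarith)))
    have h0 : α * (1+(0:ℝ))^2 * (0:ℝ) ^ (α-1) = 0 := by
      rw [Real.zero_rpow (by linarith : α - 1 ≠ 0)]; ring
    have := hc.tendsto.mono_left (nhdsWithin_le_nhds (s := Ioi (0:ℝ)))
    rwa [h0] at this
  have hev : ∀ᶠ u in 𝓝[>] (0:ℝ), α * (1+u)^2 * u ^ (α-1) < 1 :=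
    htend (Iio_mem_nhds one_pos)
  have hevu2 : ∀ᶠ u in 𝓝[>] (0:ℝ), u < u2 :=
    eventually_nhdsWithin_of_eventually_nhds (eventually_lt_nhds hu2mem.1)
  obtain ⟨u1, h1small, h1pos, h1u2⟩ := (hev.and ((eventually_mem_nhdsWithin).and hevu2)).exists
  rw [mem_Ioi] at h1pos
  -- ww u1 > 1
  have hvu1 : vv α u1 < 1/2 := by rw [← hu2v]; exact vv_mono hαpos h1pos.le h1u2
  have hvu1pos : 0 < vv α u1 := vv_pos h1pos
  have hwu1 : 1 < ww α u1 := by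
    have hber : 1 + α * (-(vv α u1)) ≤ (1 - vv α u1) ^ α := by
      have := one_add_mul_self_le_rpow_one_add (s := -(vv α u1)) (by linarith) hα.le
      convert this using 2
      ring
    have hsplit : u1 ^ α = u1 ^ (α-1) * u1 := split_rpow h1pos
    have hvform : vv α u1 = (1+u1) * (u1 ^ (α-1) * u1) := by rw [vv, hsplit]
    have hkey : α * vv α u1 * (1+u1) < u1 := by
      rw [hvform]
      calc α * ((1+u1) * (u1 ^ (α-1) * u1)) * (1+u1)
          = (α * (1+u1)^2 * u1 ^ (α-1)) * u1 := by ring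
        _ < 1 * u1 := by exact mul_lt_mul_of_pos_right h1small h1pos
        _ = u1 := one_mul u1
    have h2 : (1+u1) * (1 + α * (-(vv α u1))) ≤ (1+u1) * (1 - vv α u1) ^ α :=
      mul_le_mul_of_nonneg_left hber (by linarith)
    rw [ww]
    nlinarith
  -- IVT for ww on [u1, u2]
  have hu12 : u1 ≤ u2 := h1u2.le
  have hcontw : ContinuousOn (ww α) (Icc u1 u2) := by
    intro y hy
    have hy0 : 0 < y := lt_of_lt_of_le h1pos hy.1
    have hyv : vv α y < 1 := by
      rcases eq_or_lt_of_le hy.2 with h | h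
      · rw [h, hu2v]; norm_num
      · calc vv α y < vv α u2 := vv_mono hαpos hy0.le h
          _ < 1 := by rw [hu2v]; norm_num
    exact (hasDerivAt_ww hy0 hyv).continuousAt.continuousWithinAt
  have hIVT2 := intermediate_value_Ioo' hu12 hcontw
  have hmem2 : (1:ℝ) ∈ Ioo (ww α u2) (ww α u1) := ⟨hwu2, hwu1⟩
  obtain ⟨u0, hu0mem, hu0w⟩ := hIVT2 hmem2
  have hu00 : 0 < u0 := lt_trans h1pos hu0mem.1
  have hu01 : u0 < 1 := lt_trans hu0mem.2 hu2mem.2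
  have hu0v : vv α u0 < 1 := by
    calc vv α u0 < vv α u2 := vv_mono hαpos hu00.le hu0mem.2
      _ < 1 := by rw [hu2v]; norm_num
  exact ⟨u0, ⟨hu00, hu01, hu0v, by rw [hu0w]; linarith⟩, hu0w⟩

lemma reg_to_adm {α u0 : ℝ} (hα : 1 < α) (hreg : Reg α u0) :
    ∃ a, 1 < a ∧ a ^ (α-1) = 1 + u0 ∧ Adm α a := by
  obtain ⟨hu00, hu01, hv, hw⟩ := hreg
  have h1u : (1:ℝ) < 1 + u0 := by linarith
  set a := (1+u0) ^ ((α-1)⁻¹) with hadef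
  have ha : 1 < a :=
    Real.one_lt_rpow_iff_of_pos (by linarith) |>.mpr (Or.inl ⟨h1u, inv_pos.mpr (by linarith)⟩)
  have hba : a ^ (α-1) = 1 + u0 := by
    rw [hadef, ← Real.rpow_mul (by linarith : (0:ℝ) ≤ 1+u0),
      inv_mul_cancel₀ (by linarith : α-1 ≠ 0), Real.rpow_one]
  have hu : a ^ (α-1) - 1 = u0 := by rw [hba]; ring
  have h3 : orb α a 3 = 1 - vv α u0 := by rw [orb3_eq hα ha, hu]
  have hwlt : ww α u0 < 1 + u0 := ww_lt (by linarith : (0:ℝ) < α) hu00 hv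
  have h4 : orb α a 4 = 1 - ww α u0 := by
    rw [orb4_eq hα ha (by rw [h3]; linarith), hu]
  refine ⟨a, ha, hba, ha, ?_, ?_, ?_⟩
  · rw [orb2_eq hα ha, hu]
    exact ⟨by linarith, by linarith⟩
  · rw [h3]
    exact ⟨by linarith, by linarith [vv_pos (α := α) hu00]⟩
  · rw [h4, orb2_eq hα ha, hu]
    constructor
    · linarith
    · rw [neg_neg]; linarith

/-- Theorem 3.1: the position of `4_a` in `(2_a,-2_a)`, in Poincaré coordinates,
is a strictly increasing function of `t = p_{1,-1}(2_a)` with slope `> 1`;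
in particular the super-stable kneading sequence `RLRC`, i.e. `g = 0`, occurs for
exactly one parameter. -/
theorem stmt15 (α : ℝ) (hα : 1 < α) :
    (∀ a a' : ℝ, Adm α a → Adm α a' → tcoord α a < tcoord α a' →
      g α a' - g α a > tcoord α a' - tcoord α a)
    ∧ ∃! a : ℝ, Adm α a ∧ g α a = 0 := by
  have hpart1 : ∀ a a' : ℝ, Adm α a → Adm α a' → tcoord α a < tcoord α a' →
      g α a' - g α a > tcoord α a' - tcoord α a := by
    intro a a' hA hA' ht
    have ha : 1 < a := hA.1
    have ha' : 1 < a' := hA'.1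
    have hreg := adm_reg hα ha hA
    have hreg' := adm_reg hα ha' hA'
    have htc : tcoord α a = TT (a ^ (α-1) - 1) := tcoord_eq hα ha hreg.2.1
    have htc' : tcoord α a' = TT (a' ^ (α-1) - 1) := tcoord_eq hα ha' hreg'.2.1
    have hgg : g α a = GG α (a ^ (α-1) - 1) := g_eq hα ha hA
    have hgg' : g α a' = GG α (a' ^ (α-1) - 1) := g_eq hα ha' hA'
    have huu : a ^ (α-1) - 1 < a' ^ (α-1) - 1 := by
      by_contra hcon
      push_neg at hcon
      rcases eq_or_lt_of_le hcon with h2 | h2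
      · rw [htc, htc', h2] at ht
        exact lt_irrefl _ ht
      · have := TT_lt hreg'.1 h2 hreg.2.1
        rw [htc, htc'] at ht
        linarith
    have := FF_mono hα hreg hreg' huu
    rw [htc, htc', hgg, hgg']
    linarith
  refine ⟨hpart1, ?_⟩
  obtain ⟨u0, hreg0, hw0⟩ := exists_u0 hα
  obtain ⟨a0, ha0, hba0, hAdm0⟩ := reg_to_adm hα hreg0
  have hu0' : a0 ^ (α-1) - 1 = u0 := by rw [hba0]; ring
  have hg0 : g α a0 = 0 := by
    rw [g_eq hα ha0 hAdm0, hu0']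
    unfold GG
    rw [hw0, show (1+u0-1 : ℝ) = u0 by ring, show ((1:ℝ)-(1-u0)) = u0 by ring,
      div_self (ne_of_gt hreg0.1), Real.log_one]
  refine ⟨a0, ⟨hAdm0, hg0⟩, ?_⟩
  rintro b ⟨hAdmb, hgb⟩
  have hb : 1 < b := hAdmb.1
  have hregb := adm_reg hα hb hAdmb
  have hrega0 := adm_reg hα ha0 hAdm0
  rcases lt_trichotomy b a0 with h | h | h
  · exfalso
    have hub : b ^ (α-1) - 1 < a0 ^ (α-1) - 1 := by
      have := Real.rpow_lt_rpow (by linarith : (0:ℝ) ≤ b) h (by linarith : (0:ℝ) < α - 1)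
      linarith
    have ht : tcoord α b < tcoord α a0 := by
      rw [tcoord_eq hα hb hregb.2.1, tcoord_eq hα ha0 hrega0.2.1]
      exact TT_lt hregb.1 hub hrega0.2.1
    have := hpart1 b a0 hAdmb hAdm0 ht
    rw [hgb, hg0] at this
    linarith
  · exact h
  · exfalso
    have hub : a0 ^ (α-1) - 1 < b ^ (α-1) - 1 := by
      have := Real.rpow_lt_rpow (by linarith : (0:ℝ) ≤ a0) h (by linarith : (0:ℝ) < α - 1)
      linarith
    have ht : tcoord α a0 < tcoord α b := by
      rw [tcoord_eq hα hb hregb.2.1, tcoord_eq hα ha0 hrega0.2.1]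
      exact TT_lt hrega0.1 hub hregb.2.1
    have := hpart1 a0 b hAdm0 hAdmb ht
    rw [hgb, hg0] at this
    linarith
end
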